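/- arXiv:1708.00125 — 2 statements merged into one kernel-verified Lean document; each statement's English description precedes it below -/
import Mathlib

section
/- If a graph G vertex-arrows (K_{a_1}, ..., K_{a_r}) and a graph H vertex-arrows (H_1, ..., H_r), then the lexicographic product G[H] vertex-arrows (K_{a_1}[H_1], ..., K_{a_r}[H_r]). -/
open SimpleGraph

/-- `Copies G F S`: `G` contains a copy of `F` all of whose vertices lie in `S`. -/
def Copies {α β : Type*} (G : SimpleGraph α) (F : SimpleGraph β) (S : Set α) : Prop :=
  ∃ f : β ↪ α, (∀ a b, F.Adj a b → G.Adj (f a) (f b)) ∧ ∀ a, f a ∈ S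

/-- `G` vertex-arrows the family `F` of graphs. -/
def VArrows {α : Type*} (G : SimpleGraph α) {r : ℕ} {β : Fin r → Type*}
    (F : ∀ i, SimpleGraph (β i)) : Prop :=
  ∀ C : α → Fin r, ∃ i, Copies G (F i) {v | C v = i}

/-- `G` vertex-arrows `(F1, F2)`. -/
def VArrows2 {α β γ : Type*} (G : SimpleGraph α) (F1 : SimpleGraph β) (F2 : SimpleGraph γ) :
    Prop :=
  ∀ C : α → Bool, Copies G F1 {v | C v = true} ∨ Copies G F2 {v | C v = false}

/-- `G` edge-arrows `(F1, F2)`: every red subgraph `R ≤ G` yields a red `F1` or a blue `F2`. -/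
def EArrows2 {α β γ : Type*} (G : SimpleGraph α) (F1 : SimpleGraph β) (F2 : SimpleGraph γ) :
    Prop :=
  ∀ R : SimpleGraph α, R ≤ G → Copies R F1 Set.univ ∨ Copies (G \ R) F2 Set.univ

/-- Vertex Folkman number for a family of target graphs. -/
noncomputable def Fv {r : ℕ} {β : Fin r → Type*} (F : ∀ i, SimpleGraph (β i)) (k : ℕ) : ℕ :=
  sInf {n | ∃ G : SimpleGraph (Fin n), G.CliqueFree k ∧ VArrows G F}

/-- Two-color vertex Folkman number. -/
noncomputable def Fv2 {β γ : Type*} (F1 : SimpleGraph β) (F2 : SimpleGraph γ) (k : ℕ) : ℕ :=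
  sInf {n | ∃ G : SimpleGraph (Fin n), G.CliqueFree k ∧ VArrows2 G F1 F2}

/-- Two-color edge Folkman number. -/
noncomputable def Fe2 {β γ : Type*} (F1 : SimpleGraph β) (F2 : SimpleGraph γ) (k : ℕ) : ℕ :=
  sInf {n | ∃ G : SimpleGraph (Fin n), G.CliqueFree k ∧ EArrows2 G F1 F2}

/-- Lexicographic product `G[H]`. -/
def lexProd {α β : Type*} (G : SimpleGraph α) (H : SimpleGraph β) : SimpleGraph (α × β) where
  Adj x y := G.Adj x.1 y.1 ∨ (x.1 = y.1 ∧ H.Adj x.2 y.2)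
  symm := by constructor; rintro x y (h | ⟨e, h⟩); exacts [Or.inl h.symm, Or.inr ⟨e.symm, h.symm⟩]
  loopless := by constructor; rintro x (h | ⟨_, h⟩); exacts [G.loopless.irrefl _ h, H.loopless.irrefl _ h]

/-- Complete graph on `k` vertices. -/
def Kc (k : ℕ) : SimpleGraph (Fin k) := completeGraph (Fin k)

/-- `J_k = K_k - e`: complete graph on `k` vertices minus one edge (the one
joining the two distinguished right-hand vertices). -/
def Jgraph (k : ℕ) : SimpleGraph (Fin (k - 2) ⊕ Fin 2) where
  Adj x y := x ≠ y ∧ ¬(x.isRight ∧ y.isRight)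
  symm := ⟨fun x y ⟨h1, h2⟩ => ⟨h1.symm, fun ⟨a, b⟩ => h2 ⟨b, a⟩⟩⟩
  loopless := ⟨fun x h => h.1 rfl⟩

/-- Cycle on `n` vertices. -/
def cycle (n : ℕ) : SimpleGraph (ZMod n) where
  Adj i j := i ≠ j ∧ (i - j = 1 ∨ j - i = 1)
  symm := ⟨fun i j ⟨h1, h2⟩ => ⟨h1.symm, h2.symm⟩⟩
  loopless := ⟨fun i h => h.1 rfl⟩

/-- Join of two graphs: disjoint union plus all cross edges. -/
def graphJoin {α β : Type*} (G : SimpleGraph α) (H : SimpleGraph β) :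
    SimpleGraph (α ⊕ β) where
  Adj x y := (∃ a b, x = .inl a ∧ y = .inl b ∧ G.Adj a b) ∨
             (∃ a b, x = .inr a ∧ y = .inr b ∧ H.Adj a b) ∨
             (x.isLeft ∧ y.isRight) ∨ (x.isRight ∧ y.isLeft)
  symm := by
    constructor; rintro x y (⟨a, b, rfl, rfl, h⟩ | ⟨a, b, rfl, rfl, h⟩ | ⟨h1, h2⟩ | ⟨h1, h2⟩)
    · exact Or.inl ⟨b, a, rfl, rfl, h.symm⟩
    · exact Or.inr (Or.inl ⟨b, a, rfl, rfl, h.symm⟩)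
    · exact Or.inr (Or.inr (Or.inr ⟨h2, h1⟩))
    · exact Or.inr (Or.inr (Or.inl ⟨h2, h1⟩))
  loopless := by
    constructor; rintro x (⟨a, b, rfl, h, h'⟩ | ⟨a, b, rfl, h, h'⟩ | ⟨h1, h2⟩ | ⟨h1, h2⟩)
    · cases h; exact G.loopless.irrefl _ h'
    · cases h; exact H.loopless.irrefl _ h'
    · cases x <;> simp_all
    · cases x <;> simp_all

/-- Clique number: the largest size of a clique. -/
noncomputable def cliqueNum' {α : Type*} (G : SimpleGraph α) : ℕ :=
  sSup {n | ∃ s : Finset α, G.IsNClique n s}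


lemma castAdj {r : ℕ} {γ : Fin r → Type*} (F : ∀ i, SimpleGraph (γ i)) {i j : Fin r}
    (h : j = i) {x y : γ i} (hxy : (F i).Adj x y) :
    (F j).Adj (cast (congrArg γ h.symm) x) (cast (congrArg γ h.symm) y) := by
  subst h; exact hxy

/-- If `G → (K_{a_1},…,K_{a_r})^v` and `H → (H_1,…,H_r)^v`, then
`G[H] → (K_{a_1}[H_1],…,K_{a_r}[H_r])^v`. -/
theorem lexProd_vertex_arrows {α β : Type*} (G : SimpleGraph α) (H : SimpleGraph β)
    {r : ℕ} {γ : Fin r → Type*} (a : Fin r → ℕ) (F : ∀ i, SimpleGraph (γ i))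
    (ha : ∀ i, 2 ≤ a i)
    (hG : VArrows G (fun i => Kc (a i)))
    (hH : VArrows H F) :
    VArrows (lexProd G H) (fun i => lexProd (Kc (a i)) (F i)) := by
  classical
  intro C
  choose D f hf1 hf2 using fun u => hH (fun v => C (u, v))
  obtain ⟨i, g, hg1, hg2⟩ := hG D
  have hD : ∀ j, D (g j) = i := hg2
  refine ⟨i, ⟨fun p => (g p.1, f (g p.1) (cast (congrArg γ (hD p.1).symm) p.2)), ?_⟩, ?_, ?_⟩
  · rintro ⟨j, x⟩ ⟨k, y⟩ h
    have h1 : g j = g k := congrArg Prod.fst h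
    obtain rfl : j = k := g.injective h1
    have h2 := congrArg Prod.snd h
    simp only at h2
    have := (Equiv.cast (congrArg γ (hD j).symm)).injective ((f (g j)).injective h2)
    exact Prod.ext rfl this
  · rintro ⟨j, x⟩ ⟨k, y⟩ (h | ⟨hjk, h⟩)
    · exact Or.inl (hg1 j k h)
    · simp only at hjk
      subst hjk
      exact Or.inr ⟨rfl, hf1 (g j) _ _ (castAdj F (hD j) h)⟩
  · rintro ⟨j, x⟩
    have := hf2 (g j) (cast (congrArg γ (hD j).symm) x)
    simp only [Set.mem_setOf_eq] at this
    exact this.trans (hD j)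
end

section
/- If G vertex-arrows (K_{k-1}, K_{k-1}), G has the minimum order F_v(k-1,k-1;k) among K_k-free such graphs, and f(G) is the largest order of a K_{k-1}-free induced subgraph of G, then F_v(J_k, J_k; k) ≤ 3·F_v(k-1,k-1;k) − f(G). -/
open SimpleGraph

section Aux
variable {α W : Type*}

lemma buildJ (k : ℕ) (hk : 3 ≤ k) (G : SimpleGraph α)
    (H : SimpleGraph W) (p : W → α)
    (hadjH : ∀ x y : W, G.Adj (p x) (p y) → H.Adj x y)
    (b : Bool) (C : W → Bool)
    (g : Fin (k - 1) ↪ α) (hadj : ∀ a b' : Fin (k - 1), a ≠ b' → G.Adj (g a) (g b'))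
    (i0 : Fin (k - 1))
    (z : Fin (k - 1) → W) (hz : ∀ i, p (z i) = g i) (hzc : ∀ i, C (z i) = b)
    (x y : W) (hxy : x ≠ y) (hx : p x = g i0) (hy : p y = g i0)
    (hcx : C x = b) (hcy : C y = b) :
    Copies H (Jgraph k) {w | C w = b} := by
  have hk1 : k - 1 = (k - 2) + 1 := by omega
  let i0' : Fin ((k - 2) + 1) := Fin.cast hk1 i0
  let e1 : Fin (k - 2) → Fin (k - 1) := fun j => Fin.cast hk1.symm (i0'.succAbove j)
  have he1inj : Function.Injective e1 := by
    intro a b h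
    have : i0'.succAbove a = i0'.succAbove b := Fin.cast_injective _ h
    exact Fin.succAbove_right_injective this
  have he1ne : ∀ j, e1 j ≠ i0 := by
    intro j h
    apply Fin.succAbove_ne i0' j
    have : Fin.cast hk1 (e1 j) = Fin.cast hk1 i0 := by rw [h]
    have h2 : ((i0'.succAbove j : Fin _) : ℕ) = i0 := by simpa [e1, Fin.ext_iff] using this
    exact Fin.ext h2
  let φ : Fin (k - 2) ⊕ Fin 2 → W :=
    Sum.elim (fun j => z (e1 j)) (fun t => if t = 0 then x else y)
  have hpl : ∀ j, p (φ (Sum.inl j)) = g (e1 j) := fun j => hz _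
  have hpr : ∀ t, p (φ (Sum.inr t)) = g i0 := by
    intro t
    by_cases h : t = 0 <;> simp [φ, h, hx, hy]
  have hinj : Function.Injective φ := by
    rintro (j | t) (j' | t') h
    · have : g (e1 j) = g (e1 j') := by rw [← hpl j, ← hpl j', h]
      rw [he1inj (g.injective this)]
    · exact absurd (g.injective ((hpl j).symm.trans (h ▸ hpr t'))) (he1ne j)
    · exact absurd (g.injective ((hpl j').symm.trans (h.symm ▸ hpr t))) (he1ne j')
    · by_contra hne
      have htt : t ≠ t' := fun e => hne (by rw [e])
      fin_cases t <;> fin_cases t' <;> simp_all [φ]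
  refine ⟨⟨φ, hinj⟩, ?_, ?_⟩
  · rintro (j | t) (j' | t') ⟨hne, hnr⟩ <;>
      simp only [Function.Embedding.coeFn_mk]
    · apply hadjH
      rw [hpl j, hpl j']
      exact hadj _ _ (fun e => hne (by rw [he1inj e]))
    · apply hadjH
      rw [hpl j, hpr t']
      exact hadj _ _ (he1ne j)
    · apply hadjH
      rw [hpr t, hpl j']
      exact hadj _ _ (fun e => he1ne j' e.symm)
    · exact absurd ⟨rfl, rfl⟩ hnr
  · rintro (j | t) <;> simp only [Function.Embedding.coeFn_mk, Set.mem_setOf_eq]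
    · exact hzc _
    · by_cases h : t = 0 <;> simp [φ, h, hcx, hcy]

end Aux

/-- If `G` is a minimum-order `K_k`-free graph vertex-arrowing `(K_{k-1},K_{k-1})`
and `f` is the largest order of a `K_{k-1}`-free induced subgraph of `G`, then
`F_v(J_k,J_k;k) ≤ 3F_v(k-1,k-1;k) − f`. -/
theorem Fv_Jk_le_three_Fv_sub_f (k : ℕ) (hk : 3 ≤ k) {α : Type*} [Fintype α]
    (G : SimpleGraph α)
    (hGfree : G.CliqueFree k)
    (hGarr : VArrows2 G (Kc (k - 1)) (Kc (k - 1)))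
    (hmin : Fintype.card α = Fv2 (Kc (k - 1)) (Kc (k - 1)) k)
    (f : ℕ)
    (hf : f = sSup {m | ∃ s : Finset α, s.card = m ∧ (G.induce ↑s).CliqueFree (k - 1)}) :
    Fv2 (Jgraph k) (Jgraph k) k ≤ 3 * Fv2 (Kc (k - 1)) (Kc (k - 1)) k - f := by
  classical
  -- obtain a maximum K_{k-1}-free induced subgraph
  have hzero : (0 : ℕ) ∈ {m | ∃ s : Finset α, s.card = m ∧ (G.induce ↑s).CliqueFree (k - 1)} := by
    refine ⟨∅, by simp, ?_⟩
    intro t ht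
    have h1 := ht.card_eq
    have h2 : t.Nonempty := Finset.card_pos.mp (by omega)
    obtain ⟨⟨v, hv⟩, -⟩ := h2
    simp at hv
  have hbdd : BddAbove {m | ∃ s : Finset α, s.card = m ∧ (G.induce ↑s).CliqueFree (k - 1)} := by
    refine ⟨Fintype.card α, ?_⟩
    rintro m ⟨s, rfl, -⟩
    exact Finset.card_le_univ s
  have hfmem : f ∈ {m | ∃ s : Finset α, s.card = m ∧ (G.induce ↑s).CliqueFree (k - 1)} := by
    rw [hf]; exact Nat.sSup_mem ⟨0, hzero⟩ hbdd
  obtain ⟨s, hscard, hsfree⟩ := hfmem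
  have hfn : f ≤ Fintype.card α := hscard ▸ Finset.card_le_univ s
  -- the witness graph H on W
  let W := α ⊕ α ⊕ {v : α // v ∉ s}
  let p : W → α := Sum.elim id (Sum.elim id Subtype.val)
  let H : SimpleGraph W :=
    { Adj := fun x y => G.Adj (p x) (p y)
      symm := ⟨fun x y h => h.symm⟩
      loopless := ⟨fun x h => G.loopless.irrefl _ h⟩ }
  have hadjH : ∀ x y : W, G.Adj (p x) (p y) → H.Adj x y := fun x y h => h
  -- H is K_k-free
  have hHfree : H.CliqueFree k := by
    intro t ht
    have hinj : Set.InjOn p ↑t := by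
      intro x hx y hy hxy
      by_contra hne
      have h2 : H.Adj x y := ht.1 hx hy hne
      have h3 : G.Adj (p x) (p y) := h2
      rw [hxy] at h3
      exact G.loopless.irrefl _ h3
    apply hGfree (t.image p)
    constructor
    · intro a ha b hb hab
      simp only [Finset.coe_image, Set.mem_image, Finset.mem_coe] at ha hb
      obtain ⟨u, hu, rfl⟩ := ha
      obtain ⟨v, hv, rfl⟩ := hb
      exact ht.1 hu hv (fun h => hab (by rw [h]))
    · rw [Finset.card_image_of_injOn hinj]; exact ht.2
  -- H vertex-arrows (J_k, J_k)
  have hHarr : VArrows2 H (Jgraph k) (Jgraph k) := by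
    intro C
    let x1 : α → W := fun v => Sum.inl v
    let x2 : α → W := fun v => Sum.inr (Sum.inl v)
    have hp1 : ∀ v, p (x1 v) = v := fun v => rfl
    have hp2 : ∀ v, p (x2 v) = v := fun v => rfl
    have h12 : ∀ v, x1 v ≠ x2 v := fun v h => by simp [x1, x2] at h
    let c : α → Bool := fun v =>
      if h : v ∈ s then C (x1 v) || C (x2 v)
      else (C (x1 v) && C (x2 v)) || (C (x1 v) && C (Sum.inr (Sum.inr ⟨v, h⟩)))
        || (C (x2 v) && C (Sum.inr (Sum.inr ⟨v, h⟩)))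
    -- (A): c v = false gives two distinct false copies
    have hA : ∀ v, c v = false →
        ∃ x y : W, x ≠ y ∧ p x = v ∧ p y = v ∧ C x = false ∧ C y = false := by
      intro v hv
      by_cases h : v ∈ s
      · simp only [c, h, dif_pos, Bool.or_eq_false_iff] at hv
        exact ⟨x1 v, x2 v, h12 v, rfl, rfl, hv.1, hv.2⟩
      · let x3 : W := Sum.inr (Sum.inr ⟨v, h⟩)
        have h13 : x1 v ≠ x3 := fun e => Sum.inl_ne_inr e
        have h23 : x2 v ≠ x3 := fun e => by simp only [x2, x3] at e; cases e
        simp only [c, h, dif_neg, not_false_iff, Bool.or_eq_false_iff,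
          Bool.and_eq_false_iff] at hv
        obtain ⟨⟨hab, hac⟩, hbc⟩ := hv
        by_cases hc1 : C (x1 v) = false
        · by_cases hc2 : C (x2 v) = false
          · exact ⟨x1 v, x2 v, h12 v, rfl, rfl, hc1, hc2⟩
          · rcases hbc with h' | h'
            · exact absurd h' hc2
            · exact ⟨x1 v, x3, h13, rfl, rfl, hc1, h'⟩
        · rcases hab with h' | hb'
          · exact absurd h' hc1
          · rcases hac with h' | hc'
            · exact absurd h' hc1
            · exact ⟨x2 v, x3, h23, rfl, rfl, hb', hc'⟩
    -- (B): c v = true and v ∉ s gives two distinct true copies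
    have hB : ∀ v, v ∉ s → c v = true →
        ∃ x y : W, x ≠ y ∧ p x = v ∧ p y = v ∧ C x = true ∧ C y = true := by
      intro v h hv
      let x3 : W := Sum.inr (Sum.inr ⟨v, h⟩)
      have h13 : x1 v ≠ x3 := fun e => Sum.inl_ne_inr e
      have h23 : x2 v ≠ x3 := fun e => by simp only [x2, x3] at e; cases e
      simp only [c, h, dif_neg, not_false_iff, Bool.or_eq_true, Bool.and_eq_true] at hv
      rcases hv with (⟨ha, hb⟩ | ⟨ha, hc⟩) | ⟨hb, hc⟩
      · exact ⟨x1 v, x2 v, h12 v, rfl, rfl, ha, hb⟩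
      · exact ⟨x1 v, x3, h13, rfl, rfl, ha, hc⟩
      · exact ⟨x2 v, x3, h23, rfl, rfl, hb, hc⟩
    -- (C): c v = true gives one true copy
    have hC : ∀ v, c v = true → ∃ x : W, p x = v ∧ C x = true := by
      intro v hv
      by_cases h : v ∈ s
      · simp only [c, h, dif_pos, Bool.or_eq_true] at hv
        rcases hv with ha | hb
        · exact ⟨x1 v, rfl, ha⟩
        · exact ⟨x2 v, rfl, hb⟩
      · obtain ⟨x, y, -, hx, -, hcx, -⟩ := hB v h hv
        exact ⟨x, hx, hcx⟩
    rcases hGarr c with ⟨g, hadj, hmem⟩ | ⟨g, hadj, hmem⟩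
    · -- red case
      left
      have hadj' : ∀ a b : Fin (k - 1), a ≠ b → G.Adj (g a) (g b) := by
        intro a b hab
        exact hadj a b hab
      have hmem' : ∀ a, c (g a) = true := fun a => hmem a
      -- some vertex of the clique is outside s
      have hex : ∃ i0, g i0 ∉ s := by
        by_contra h
        push_neg at h
        apply hsfree (Finset.univ.image (fun i => (⟨g i, h i⟩ : ↑(↑s : Set α))))
        constructor
        · intro a ha b hb hab
          simp only [Finset.coe_image, Set.mem_image] at ha hb
          obtain ⟨i, -, rfl⟩ := ha
          obtain ⟨j, -, rfl⟩ := hb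
          have hij : i ≠ j := fun e => hab (by rw [e])
          exact hadj' i j hij
        · rw [Finset.card_image_of_injective _ (fun i j hij => g.injective
            (congrArg Subtype.val hij)), Finset.card_univ, Fintype.card_fin]
      obtain ⟨i0, hi0⟩ := hex
      obtain ⟨x, y, hxy, hxv, hyv, hcx, hcy⟩ := hB (g i0) hi0 (hmem' i0)
      choose z hzp hzc using fun i => hC (g i) (hmem' i)
      exact buildJ k hk G H p hadjH true C g hadj' i0 z hzp hzc x y hxy hxv hyv hcx hcy
    · -- blue case
      right
      have hadj' : ∀ a b : Fin (k - 1), a ≠ b → G.Adj (g a) (g b) := by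
        intro a b hab
        exact hadj a b hab
      have hmem' : ∀ a, c (g a) = false := fun a => hmem a
      choose x y hxy hxv hyv hcx hcy using fun i => hA (g i) (hmem' i)
      have hpos : 0 < k - 1 := by omega
      let i0 : Fin (k - 1) := ⟨0, hpos⟩
      exact buildJ k hk G H p hadjH false C g hadj' i0 x hxv hcx (x i0) (y i0)
        (hxy i0) (hxv i0) (hyv i0) (hcx i0) (hcy i0)
  -- cardinality of W
  have hcardW : Fintype.card W = 3 * Fintype.card α - f := by
    have h1 : Fintype.card {v : α // v ∉ s} = Fintype.card α - s.card := by
      rw [Fintype.card_subtype_compl, Fintype.card_coe]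
    simp only [W, Fintype.card_sum, h1, hscard]
    omega
  -- transport to Fin N
  set N := 3 * Fintype.card α - f with hN
  let e : Fin N ≃ W := (finCongr hcardW.symm).trans (Fintype.equivFin W).symm
  let H' : SimpleGraph (Fin N) := H.comap e
  have hH'free : H'.CliqueFree k := by
    intro t ht
    apply hHfree (t.image e)
    constructor
    · intro a ha b hb hab
      simp only [Finset.coe_image, Set.mem_image, Finset.mem_coe] at ha hb
      obtain ⟨u, hu, rfl⟩ := ha
      obtain ⟨v, hv, rfl⟩ := hb
      exact ht.1 hu hv (fun h => hab (by rw [h]))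
    · rw [Finset.card_image_of_injective _ e.injective]; exact ht.2
  have hH'arr : VArrows2 H' (Jgraph k) (Jgraph k) := by
    intro C'
    rcases hHarr (fun w => C' (e.symm w)) with ⟨φ, h1, h2⟩ | ⟨φ, h1, h2⟩
    · left
      refine ⟨φ.trans e.symm.toEmbedding, ?_, ?_⟩
      · intro a b hab
        have := h1 a b hab
        simpa [H', SimpleGraph.comap] using this
      · intro a
        exact h2 a
    · right
      refine ⟨φ.trans e.symm.toEmbedding, ?_, ?_⟩
      · intro a b hab
        have := h1 a b hab
        simpa [H', SimpleGraph.comap] using this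
      · intro a
        exact h2 a
  have hmemN : N ∈ {n | ∃ G : SimpleGraph (Fin n),
      G.CliqueFree k ∧ VArrows2 G (Jgraph k) (Jgraph k)} := ⟨H', hH'free, hH'arr⟩
  calc Fv2 (Jgraph k) (Jgraph k) k ≤ N := Nat.sInf_le hmemN
    _ = 3 * Fv2 (Kc (k - 1)) (Kc (k - 1)) k - f := by rw [hN, hmin]
end
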